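/- arXiv:2002.08261 — 2 statements merged into one kernel-verified Lean document; each statement's English description precedes it below -/
import Mathlib

section
/- The Banach algebra ℓ^p (1 < p < ∞) with pointwise multiplication has jointly weakly sequentially continuous multiplication: if (x_n) and (y_n) are weakly null sequences in ℓ^p, then (x_n · y_n) (pointwise product) is weakly null in ℓ^p. -/
open Filter Topology ENNReal

/-- A sequence is weakly null if `f (x n) → 0` for every continuous linear functional `f`. -/
def WeaklyNull {A : Type*} [NormedAddCommGroup A] [NormedSpace ℝ A] (x : ℕ → A) : Prop :=
  ∀ f : A →L[ℝ] ℝ, Tendsto (fun n => f (x n)) atTop (𝓝 0)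

/-- A sequence is weakly Cauchy if `f (x n)` converges for every continuous linear functional. -/
def WeaklyCauchy {A : Type*} [NormedAddCommGroup A] [NormedSpace ℝ A] (x : ℕ → A) : Prop :=
  ∀ f : A →L[ℝ] ℝ, ∃ L : ℝ, Tendsto (fun n => f (x n)) atTop (𝓝 L)

/-- `E ⊆ A*` is an L-set: `sup_{f ∈ E} |f (x n)| → 0` for every weakly null `x`. -/
def LSet {A : Type*} [NormedAddCommGroup A] [NormedSpace ℝ A] (E : Set (A →L[ℝ] ℝ)) : Prop :=
  ∀ x : ℕ → A, WeaklyNull x → ∀ ε > (0 : ℝ), ∃ N : ℕ, ∀ n ≥ N, ∀ f ∈ E, |f (x n)| < ε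

/-- A set is weakly precompact if every sequence in it has a weakly Cauchy subsequence. -/
def WeaklyPrecompact {A : Type*} [NormedAddCommGroup A] [NormedSpace ℝ A] (K : Set A) : Prop :=
  ∀ x : ℕ → A, (∀ n, x n ∈ K) → ∃ φ : ℕ → ℕ, StrictMono φ ∧ WeaklyCauchy (x ∘ φ)

/-- A map is completely continuous if it sends weakly null sequences to norm null sequences. -/
def CompletelyContinuous {A B : Type*} [NormedAddCommGroup A] [NormedSpace ℝ A]
    [NormedAddCommGroup B] (T : A → B) : Prop :=
  ∀ x : ℕ → A, WeaklyNull x → Tendsto (fun n => ‖T (x n)‖) atTop (𝓝 0)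

/-- The multiplication operator `T_f : A → A*`, `(T_f a) x = f (a * x)`. -/
noncomputable def Tf {A : Type*} [NormedRing A] [NormedAlgebra ℝ A]
    (f : A →L[ℝ] ℝ) (a : A) : A →L[ℝ] ℝ :=
  f.comp (ContinuousLinearMap.mul ℝ A a)

/-- The multiplication operator `S_f : A → A*`, `(S_f a) x = f (x * a)`. -/
noncomputable def Sf {A : Type*} [NormedRing A] [NormedAlgebra ℝ A]
    (f : A →L[ℝ] ℝ) (a : A) : A →L[ℝ] ℝ :=
  f.comp ((ContinuousLinearMap.mul ℝ A).flip a)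

/-- `w` is an ℓ¹-sequence: equivalent to the unit vector basis of ℓ¹. -/
def IsL1Sequence {A : Type*} [NormedAddCommGroup A] [NormedSpace ℝ A] (w : ℕ → A) : Prop :=
  ∃ c C : ℝ, 0 < c ∧ ∀ (s : Finset ℕ) (lam : ℕ → ℝ),
    c * ∑ n ∈ s, |lam n| ≤ ‖∑ n ∈ s, lam n • w n‖ ∧
      ‖∑ n ∈ s, lam n • w n‖ ≤ C * ∑ n ∈ s, |lam n|

/-- The Schur property: weakly convergent sequences are norm convergent. -/
def SchurProperty (A : Type*) [NormedAddCommGroup A] [NormedSpace ℝ A] : Prop :=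
  ∀ (x : ℕ → A) (L : A),
    (∀ f : A →L[ℝ] ℝ, Tendsto (fun n => f (x n)) atTop (𝓝 (f L))) →
      Tendsto x atTop (𝓝 L)



section LpAux

open Finset

/-- Weakly null sequences are norm bounded (Banach–Steinhaus). -/
lemma weaklyNull_bdd {A : Type*} [NormedAddCommGroup A] [NormedSpace ℝ A]
    (x : ℕ → A) (hx : WeaklyNull x) : ∃ M : ℝ, 0 ≤ M ∧ ∀ n, ‖x n‖ ≤ M := by
  have h : ∀ f : StrongDual ℝ A, ∃ C, ∀ n,
      ‖(NormedSpace.inclusionInDoubleDual ℝ A (x n)) f‖ ≤ C := by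
    intro f
    obtain ⟨C, hC⟩ := ((hx f).norm).bddAbove_range
    refine ⟨C, fun n => ?_⟩
    have : ‖f (x n)‖ ≤ C := hC (Set.mem_range_self n)
    simpa [NormedSpace.dual_def] using this
  obtain ⟨C, hC⟩ := banach_steinhaus h
  refine ⟨max C 0, le_max_right _ _, fun n => ?_⟩
  have h2 : ‖NormedSpace.inclusionInDoubleDual ℝ A (x n)‖ = ‖x n‖ :=
    (NormedSpace.inclusionInDoubleDualLi ℝ (E := A)).norm_map (x n)
  exact h2 ▸ le_max_of_le_left (hC n)

/-- The coordinate functionals applied to a weakly null sequence tend to zero. -/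
lemma coord_tendsto {p : ℝ≥0∞} [Fact (1 ≤ p)] (x : ℕ → lp (fun _ : ℕ => ℝ) p)
    (hx : WeaklyNull x) (i : ℕ) :
    Tendsto (fun n => (x n : ℕ → ℝ) i) atTop (𝓝 0) := by
  have hp0 : p ≠ 0 := (lt_of_lt_of_le zero_lt_one Fact.out).ne'
  let L : lp (fun _ : ℕ => ℝ) p →ₗ[ℝ] ℝ :=
    { toFun := fun w => (w : ℕ → ℝ) i
      map_add' := fun w v => rfl
      map_smul' := fun c w => rfl }
  have := hx (L.mkContinuous 1 (fun w => by
    have h : ‖(w : ℕ → ℝ) i‖ ≤ 1 * ‖w‖ := by simpa using lp.norm_apply_le_norm hp0 w i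
    exact h))
  exact this

lemma single_eq_smul {p : ℝ≥0∞} [Fact (1 ≤ p)] (i : ℕ) (c : ℝ) :
    lp.single (E := fun _ : ℕ => ℝ) p i c = c • lp.single p i (1 : ℝ) := by
  rw [← lp.single_smul]
  norm_num

lemma real_sign_mul_self (t : ℝ) : Real.sign t * t = |t| := by
  rcases lt_trichotomy t 0 with h | h | h
  · rw [Real.sign_of_neg h, abs_of_neg h]; ring
  · simp [h]
  · rw [Real.sign_of_pos h, abs_of_pos h]; ring

/-- Representation of a functional against the canonical basis expansion. -/
lemma rep_hasSum {p : ℝ≥0∞} [Fact (1 ≤ p)] (hp2 : p ≠ ⊤)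
    (f : lp (fun _ : ℕ => ℝ) p →L[ℝ] ℝ) (w : lp (fun _ : ℕ => ℝ) p) :
    HasSum (fun i => f (lp.single p i 1) * (w : ℕ → ℝ) i) (f w) := by
  have h : HasSum (fun i => f (lp.single p i ((w : ℕ → ℝ) i))) (f w) :=
    (lp.hasSum_single hp2 w).mapL f
  refine h.congr_fun fun i => ?_
  conv_rhs => rw [single_eq_smul, map_smul, smul_eq_mul, mul_comm]

/-- The coefficient sequence of a functional is `q`-power summable,
with partial sums bounded by `‖f‖ ^ q`. -/
lemma sum_coeff_rpow_le {p : ℝ≥0∞} [Fact (1 ≤ p)]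
    {q : ℝ} (hpq : p.toReal.HolderConjugate q)
    (f : lp (fun _ : ℕ => ℝ) p →L[ℝ] ℝ) (s : Finset ℕ) :
    ∑ i ∈ s, |f (lp.single p i 1)| ^ q ≤ ‖f‖ ^ q := by
  set pr := p.toReal with hpr
  have hpr0 : 0 < pr := hpq.pos
  have hq0 : 0 < q := hpq.symm.pos
  have hq1 : 1 < q := hpq.symm.lt
  set g : ℕ → ℝ := fun i => f (lp.single p i 1) with hg
  set lam : ℕ → ℝ := fun i => Real.sign (g i) * |g i| ^ (q - 1) with hlam
  set S : ℝ := ∑ i ∈ s, |g i| ^ q with hS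
  have hS0 : 0 ≤ S := Finset.sum_nonneg fun i _ => Real.rpow_nonneg (abs_nonneg _) _
  set u : lp (fun _ : ℕ => ℝ) p := ∑ i ∈ s, lp.single p i (lam i) with hu
  have hfu : f u = S := by
    rw [hu, map_sum]
    refine Finset.sum_congr rfl fun i _ => ?_
    rw [single_eq_smul, map_smul, smul_eq_mul]
    calc lam i * f (lp.single p i 1) = lam i * g i := rfl
      _ = (Real.sign (g i) * g i) * |g i| ^ (q - 1) := by rw [hlam]; ring
      _ = |g i| ^ (1 : ℝ) * |g i| ^ (q - 1) := by rw [real_sign_mul_self, Real.rpow_one]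
      _ = |g i| ^ q := by
          rw [← Real.rpow_add' (abs_nonneg _) (by norm_num; linarith)]
          norm_num
  have habs : ∀ i, |lam i| ^ pr = |g i| ^ q := by
    intro i
    have h2 : |lam i| = |g i| ^ (q - 1) := by
      have hnn : (0:ℝ) ≤ |g i| ^ (q - 1) := Real.rpow_nonneg (abs_nonneg _) _
      simp only [hlam]
      rcases lt_trichotomy (g i) 0 with h | h | h
      · rw [Real.sign_of_neg h, abs_mul, abs_neg, abs_one, one_mul, abs_of_nonneg hnn]
      · simp [h, Real.zero_rpow (by linarith : q - 1 ≠ 0)]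
      · rw [Real.sign_of_pos h, abs_mul, abs_one, one_mul, abs_of_nonneg hnn]
    rw [h2, ← Real.rpow_mul (abs_nonneg _), hpq.symm.sub_one_mul_conj]
  have hnorm : ‖u‖ ^ pr = S := by
    rw [hu, lp.norm_sum_single hpr0, hS]
    exact Finset.sum_congr rfl fun i _ => by rw [Real.norm_eq_abs, habs]
  have hunorm : ‖u‖ = S ^ (1 / pr) := by
    rw [← hnorm, ← Real.rpow_mul (norm_nonneg _), mul_one_div_cancel hpr0.ne', Real.rpow_one]
  have h3 : S ≤ ‖f‖ * S ^ (1 / pr) := by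
    calc S = f u := hfu.symm
      _ ≤ |f u| := le_abs_self _
      _ = ‖f u‖ := (Real.norm_eq_abs _).symm
      _ ≤ ‖f‖ * ‖u‖ := f.le_opNorm u
      _ = ‖f‖ * S ^ (1 / pr) := by rw [hunorm]
  rcases eq_or_lt_of_le hS0 with h0 | h0
  · have := Real.rpow_nonneg (norm_nonneg f) q
    linarith
  · have hSpr : 0 < S ^ (1 / pr) := Real.rpow_pos_of_pos h0 _
    have h4 : S ^ (1 / q) ≤ ‖f‖ := by
      have key : S ^ (1 / q) = S / S ^ (1 / pr) := by
        rw [eq_div_iff hSpr.ne', ← Real.rpow_add h0]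
        have hsum : 1 / q + 1 / pr = 1 := by
          rw [one_div, one_div, add_comm]; exact Real.HolderConjugate.inv_add_inv_eq_one hpq
        rw [hsum, Real.rpow_one]
      rw [key, div_le_iff₀ hSpr]
      exact h3
    calc S = (S ^ (1 / q)) ^ q := by
          rw [← Real.rpow_mul hS0, one_div_mul_cancel hq0.ne', Real.rpow_one]
      _ ≤ ‖f‖ ^ q := Real.rpow_le_rpow (Real.rpow_nonneg hS0 _) h4 hq0.le

/-- Norm-bounded, coordinatewise null sequences in `ℓᵖ` (`1 < p < ∞`) are weakly null. -/
lemma weaklyNull_of_bdd_coord {p : ℝ≥0∞} [Fact (1 ≤ p)] (hp1 : 1 < p) (hp2 : p ≠ ⊤)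
    (z : ℕ → lp (fun _ : ℕ => ℝ) p) {M : ℝ} (hM : 0 ≤ M) (hbd : ∀ n, ‖z n‖ ≤ M)
    (hcoord : ∀ i, Tendsto (fun n => (z n : ℕ → ℝ) i) atTop (𝓝 0)) :
    WeaklyNull z := by
  intro f
  have hpr1 : 1 < p.toReal := by
    have := ENNReal.toReal_strict_mono hp2 hp1
    simpa using this
  set pr := p.toReal with hprdef
  have hpr0 : 0 < pr := by linarith
  have hpq : pr.HolderConjugate (Real.conjExponent pr) :=
    Real.HolderConjugate.conjExponent hpr1
  set q : ℝ := Real.conjExponent pr with hqdef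
  have hq0 : 0 < q := hpq.symm.pos
  set c : ℕ → ℝ := fun i => f (lp.single p i 1) with hc
  set g : ℕ → ℝ := fun i => |c i| ^ q with hg
  have hgnn : ∀ i, 0 ≤ g i := fun i => Real.rpow_nonneg (abs_nonneg _) _
  have hgsum : Summable g := summable_of_sum_le hgnn (fun s => sum_coeff_rpow_le hpq f s)
  rw [NormedAddCommGroup.tendsto_nhds_zero]
  intro ε hε
  set δ : ℝ := ε / (2 * (M + 1)) with hδdef
  have hδ : 0 < δ := by positivity
  have htail : Tendsto (fun N => ∑' k, g (k + N)) atTop (𝓝 0) := tendsto_sum_nat_add g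
  have hδq : 0 < δ ^ q := Real.rpow_pos_of_pos hδ q
  obtain ⟨N, hN⟩ : ∃ N, ∑' k, g (k + N) < δ ^ q :=
    (htail.eventually (eventually_lt_nhds hδq)).exists
  set T : ℝ := ∑' k, g (k + N) with hT
  have hgshift : Summable fun k => g (k + N) := (summable_nat_add_iff N).2 hgsum
  have hTnn : 0 ≤ T := tsum_nonneg fun k => hgnn _
  have hTq : T ^ (1 / q) ≤ δ := by
    calc T ^ (1 / q) ≤ (δ ^ q) ^ (1 / q) :=
          Real.rpow_le_rpow hTnn hN.le (by positivity)
      _ = δ := by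
          rw [← Real.rpow_mul hδ.le, mul_one_div_cancel hq0.ne', Real.rpow_one]
  have tail_bound : ∀ n, |∑' i, c (i + N) * (z n : ℕ → ℝ) (i + N)| ≤ T ^ (1 / q) * M := by
    intro n
    have hrep := rep_hasSum hp2 f (z n)
    have hsummable : Summable fun i => c i * (z n : ℕ → ℝ) i := hrep.summable
    have hshift : Summable fun i => c (i + N) * (z n : ℕ → ℝ) (i + N) :=
      (summable_nat_add_iff N).2 hsummable
    have hfin : ∀ t : Finset ℕ,
        |∑ i ∈ t, c (i + N) * (z n : ℕ → ℝ) (i + N)| ≤ T ^ (1 / q) * M := by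
      intro t
      have h1 : |∑ i ∈ t, c (i + N) * (z n : ℕ → ℝ) (i + N)| ≤
          ∑ i ∈ t, |c (i + N)| * |(z n : ℕ → ℝ) (i + N)| := by
        refine (Finset.abs_sum_le_sum_abs _ _).trans ?_
        refine le_of_eq (Finset.sum_congr rfl fun i _ => abs_mul _ _)
      have h2 : ∑ i ∈ t, |c (i + N)| * |(z n : ℕ → ℝ) (i + N)| ≤
          (∑ i ∈ t, |c (i + N)| ^ q) ^ (1 / q) *
            (∑ i ∈ t, |(z n : ℕ → ℝ) (i + N)| ^ pr) ^ (1 / pr) := by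
        have := Real.inner_le_Lp_mul_Lq (s := t)
          (fun i => |c (i + N)|) (fun i => |(z n : ℕ → ℝ) (i + N)|) hpq.symm
        simpa [abs_abs] using this
      have h3 : (∑ i ∈ t, |c (i + N)| ^ q) ^ (1 / q) ≤ T ^ (1 / q) := by
        refine Real.rpow_le_rpow (Finset.sum_nonneg fun i _ => hgnn _) ?_ (by positivity)
        exact Summable.sum_le_tsum t (fun i _ => hgnn _) hgshift
      have h4 : (∑ i ∈ t, |(z n : ℕ → ℝ) (i + N)| ^ pr) ^ (1 / pr) ≤ M := by
        have himg : ∑ i ∈ t, |(z n : ℕ → ℝ) (i + N)| ^ pr =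
            ∑ j ∈ t.image (· + N), ‖(z n : ℕ → ℝ) j‖ ^ pr := by
          rw [Finset.sum_image (fun a _ b _ h => by omega)]
          exact Finset.sum_congr rfl fun i _ => by rw [Real.norm_eq_abs]
        have hle : ∑ i ∈ t, |(z n : ℕ → ℝ) (i + N)| ^ pr ≤ ‖z n‖ ^ pr := by
          rw [himg]
          exact lp.sum_rpow_le_norm_rpow hpr0 (z n) _
        calc (∑ i ∈ t, |(z n : ℕ → ℝ) (i + N)| ^ pr) ^ (1 / pr)
            ≤ (‖z n‖ ^ pr) ^ (1 / pr) := Real.rpow_le_rpow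
              (Finset.sum_nonneg fun i _ => Real.rpow_nonneg (abs_nonneg _) _) hle
              (by positivity)
          _ = ‖z n‖ := by
              rw [← Real.rpow_mul (norm_nonneg _), mul_one_div_cancel hpr0.ne',
                Real.rpow_one]
          _ ≤ M := hbd n
      calc |∑ i ∈ t, c (i + N) * (z n : ℕ → ℝ) (i + N)|
          ≤ (∑ i ∈ t, |c (i + N)| ^ q) ^ (1 / q) *
            (∑ i ∈ t, |(z n : ℕ → ℝ) (i + N)| ^ pr) ^ (1 / pr) := h1.trans h2
        _ ≤ T ^ (1 / q) * M := by
            refine mul_le_mul h3 h4 (by positivity) (by positivity)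
    have habs : Tendsto (fun t : Finset ℕ => |∑ i ∈ t, c (i + N) * (z n : ℕ → ℝ) (i + N)|)
        atTop (𝓝 |∑' i, c (i + N) * (z n : ℕ → ℝ) (i + N)|) :=
      (continuous_abs.tendsto _).comp hshift.hasSum
    exact le_of_tendsto habs (Eventually.of_forall hfin)
  have head_tendsto : Tendsto (fun n => ∑ i ∈ Finset.range N, c i * (z n : ℕ → ℝ) i)
      atTop (𝓝 0) := by
    have : Tendsto (fun n => ∑ i ∈ Finset.range N, c i * (z n : ℕ → ℝ) i) atTop
        (𝓝 (∑ i ∈ Finset.range N, c i * 0)) :=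
      tendsto_finset_sum _ fun i _ => (hcoord i).const_mul (c i)
    simpa using this
  have head_small : ∀ᶠ n in atTop, |∑ i ∈ Finset.range N, c i * (z n : ℕ → ℝ) i| < ε / 2 := by
    have habs0 : Tendsto (fun n => |∑ i ∈ Finset.range N, c i * (z n : ℕ → ℝ) i|)
        atTop (𝓝 0) := by simpa using head_tendsto.abs
    exact habs0.eventually (eventually_lt_nhds (by positivity))
  filter_upwards [head_small] with n hn
  have hrep := rep_hasSum hp2 f (z n)
  have hsummable : Summable fun i => c i * (z n : ℕ → ℝ) i := hrep.summable
  have hsplit : ∑ i ∈ Finset.range N, c i * (z n : ℕ → ℝ) i +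
      ∑' i, c (i + N) * (z n : ℕ → ℝ) (i + N) = f (z n) := by
    rw [Summable.sum_add_tsum_nat_add N hsummable, hrep.tsum_eq]
  have hδM : T ^ (1 / q) * M < ε / 2 := by
    have h5 : T ^ (1 / q) * M ≤ δ * M := mul_le_mul_of_nonneg_right hTq hM
    have h6 : δ * M < δ * (M + 1) := by nlinarith
    have h7 : δ * (M + 1) = ε / 2 := by
      rw [hδdef]; field_simp
    linarith
  rw [Real.norm_eq_abs, ← hsplit]
  calc |∑ i ∈ Finset.range N, c i * (z n : ℕ → ℝ) i +
      ∑' i, c (i + N) * (z n : ℕ → ℝ) (i + N)|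
      ≤ |∑ i ∈ Finset.range N, c i * (z n : ℕ → ℝ) i| +
        |∑' i, c (i + N) * (z n : ℕ → ℝ) (i + N)| := abs_add_le _ _
    _ < ε / 2 + ε / 2 := by
        have := tail_bound n
        linarith
    _ = ε := by ring

end LpAux

theorem lp_pointwise_mul_jwsc (p : ℝ≥0∞) [Fact (1 ≤ p)] (hp1 : 1 < p) (hp2 : p ≠ ⊤)
    (x y z : ℕ → lp (fun _ : ℕ => ℝ) p)
    (hx : WeaklyNull x) (hy : WeaklyNull y)
    (hz : ∀ n i, (z n : ℕ → ℝ) i = (x n : ℕ → ℝ) i * (y n : ℕ → ℝ) i) :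
    WeaklyNull z := by
  obtain ⟨Mx, hMx0, hMx⟩ := weaklyNull_bdd x hx
  obtain ⟨My, hMy0, hMy⟩ := weaklyNull_bdd y hy
  have hpr1 : 1 < p.toReal := by
    have := ENNReal.toReal_strict_mono hp2 hp1
    simpa using this
  have hpr0 : 0 < p.toReal := by linarith
  have hp0 : p ≠ 0 := (lt_of_lt_of_le zero_lt_one Fact.out).ne'
  have hbd : ∀ n, ‖z n‖ ≤ Mx * My := by
    intro n
    refine lp.norm_le_of_forall_sum_le hpr0 (mul_nonneg hMx0 hMy0) (fun s => ?_)
    have step : ∀ i ∈ s, ‖(z n : ℕ → ℝ) i‖ ^ p.toReal ≤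
        ‖(x n : ℕ → ℝ) i‖ ^ p.toReal * My ^ p.toReal := by
      intro i _
      have h1 : ‖(z n : ℕ → ℝ) i‖ = |(x n : ℕ → ℝ) i| * |(y n : ℕ → ℝ) i| := by
        rw [Real.norm_eq_abs, hz n i, abs_mul]
      have h2 : |(y n : ℕ → ℝ) i| ≤ My := by
        refine le_trans ?_ (hMy n)
        simpa [Real.norm_eq_abs] using lp.norm_apply_le_norm hp0 (y n) i
      calc ‖(z n : ℕ → ℝ) i‖ ^ p.toReal
          = (|(x n : ℕ → ℝ) i| * |(y n : ℕ → ℝ) i|) ^ p.toReal := by rw [h1]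
        _ ≤ (|(x n : ℕ → ℝ) i| * My) ^ p.toReal :=
            Real.rpow_le_rpow (by positivity)
              (mul_le_mul_of_nonneg_left h2 (abs_nonneg _)) hpr0.le
        _ = |(x n : ℕ → ℝ) i| ^ p.toReal * My ^ p.toReal :=
            Real.mul_rpow (abs_nonneg _) hMy0
        _ = ‖(x n : ℕ → ℝ) i‖ ^ p.toReal * My ^ p.toReal := by
            rw [Real.norm_eq_abs]
    calc ∑ i ∈ s, ‖(z n : ℕ → ℝ) i‖ ^ p.toReal
        ≤ ∑ i ∈ s, ‖(x n : ℕ → ℝ) i‖ ^ p.toReal * My ^ p.toReal := Finset.sum_le_sum step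
      _ = (∑ i ∈ s, ‖(x n : ℕ → ℝ) i‖ ^ p.toReal) * My ^ p.toReal := by
          rw [Finset.sum_mul]
      _ ≤ ‖x n‖ ^ p.toReal * My ^ p.toReal :=
          mul_le_mul_of_nonneg_right (lp.sum_rpow_le_norm_rpow hpr0 (x n) s)
            (Real.rpow_nonneg hMy0 _)
      _ ≤ Mx ^ p.toReal * My ^ p.toReal :=
          mul_le_mul_of_nonneg_right
            (Real.rpow_le_rpow (norm_nonneg _) (hMx n) hpr0.le)
            (Real.rpow_nonneg hMy0 _)
      _ = (Mx * My) ^ p.toReal := (Real.mul_rpow hMx0 hMy0).symm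
  have hcoord : ∀ i, Tendsto (fun n => (z n : ℕ → ℝ) i) atTop (𝓝 0) := by
    intro i
    have := (coord_tendsto x hx i).mul (coord_tendsto y hy i)
    simp only [hz]
    simpa using this
  exact weaklyNull_of_bdd_coord hp1 hp2 z (mul_nonneg hMx0 hMy0) hbd hcoord
end

section
/- Let X be a Banach space and A = K(X). If for every f ∈ A* and every weakly null (x_n) and bounded (y_n) in K(X) one has f(y_n x_n) → 0, then X has the Schur property. -/
open Filter Topology ENNReal

variable (X : Type*) [NormedAddCommGroup X] [NormedSpace ℝ X]

/-- The space `K(X)` of compact operators on `X`, as a submodule of `X →L[ℝ] X`. -/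
noncomputable abbrev KX : Submodule ℝ (X →L[ℝ] X) :=
  compactOperator (RingHom.id ℝ) X X

/-- Multiplication (composition) in `K(X)`. -/
noncomputable def Kmul {X : Type*} [NormedAddCommGroup X] [NormedSpace ℝ X]
    (a b : KX X) : KX X :=
  ⟨(a : X →L[ℝ] X).comp (b : X →L[ℝ] X), by
    exact a.2.comp_clm (b : X →L[ℝ] X)⟩

/-- Right multiplication by `a` in `K(X)` as a continuous linear map. -/
noncomputable def KmulRight {X : Type*} [NormedAddCommGroup X] [NormedSpace ℝ X]
    (a : KX X) : KX X →L[ℝ] KX X :=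
  LinearMap.mkContinuous
    { toFun := fun b => Kmul b a
      map_add' := by
        intro b c
        apply Subtype.ext
        simp [Kmul, ContinuousLinearMap.add_comp]
      map_smul' := by
        intro r b
        apply Subtype.ext
        simp [Kmul, ContinuousLinearMap.smul_comp] }
    ‖(a : X →L[ℝ] X)‖
    (by
      intro b
      calc ‖Kmul b a‖ = ‖(b : X →L[ℝ] X).comp (a : X →L[ℝ] X)‖ := rfl
        _ ≤ ‖(b : X →L[ℝ] X)‖ * ‖(a : X →L[ℝ] X)‖ := ContinuousLinearMap.opNorm_comp_le _ _
        _ = ‖(a : X →L[ℝ] X)‖ * ‖b‖ := by rw [mul_comm]; rfl)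

/-- Left multiplication by `a` in `K(X)` as a continuous linear map. -/
noncomputable def KmulLeft {X : Type*} [NormedAddCommGroup X] [NormedSpace ℝ X]
    (a : KX X) : KX X →L[ℝ] KX X :=
  LinearMap.mkContinuous
    { toFun := fun b => Kmul a b
      map_add' := by
        intro b c
        apply Subtype.ext
        simp [Kmul, ContinuousLinearMap.comp_add]
      map_smul' := by
        intro r b
        apply Subtype.ext
        simp [Kmul, ContinuousLinearMap.comp_smul] }
    ‖(a : X →L[ℝ] X)‖
    (by
      intro b
      calc ‖Kmul a b‖ = ‖(a : X →L[ℝ] X).comp (b : X →L[ℝ] X)‖ := rfl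
        _ ≤ ‖(a : X →L[ℝ] X)‖ * ‖(b : X →L[ℝ] X)‖ := ContinuousLinearMap.opNorm_comp_le _ _
        _ = ‖(a : X →L[ℝ] X)‖ * ‖b‖ := rfl)

/-- The operator `T_f : K(X) → K(X)*`, `(T_f a)(x) = f (a x)` (product = composition). -/
noncomputable def TfK {X : Type*} [NormedAddCommGroup X] [NormedSpace ℝ X]
    (f : KX X →L[ℝ] ℝ) (a : KX X) : KX X →L[ℝ] ℝ :=
  f.comp (KmulLeft a)

/-- The operator `S_f : K(X) → K(X)*`, `(S_f a)(x) = f (x a)`. -/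
noncomputable def SfK {X : Type*} [NormedAddCommGroup X] [NormedSpace ℝ X]
    (f : KX X →L[ℝ] ℝ) (a : KX X) : KX X →L[ℝ] ℝ :=
  f.comp (KmulRight a)

section Aux
variable {X : Type*} [NormedAddCommGroup X] [NormedSpace ℝ X]

lemma isCompactOperator_smulRight' (φ : X →L[ℝ] ℝ) (z : X) :
    IsCompactOperator (φ.smulRight z) := by
  refine ⟨(fun t : ℝ => t • z) '' Set.Icc (-1) 1,
    (isCompact_Icc).image (by continuity), ?_⟩
  have : φ ⁻¹' Set.Icc (-1 : ℝ) 1 ∈ (𝓝 0 : Filter X) := by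
    apply φ.continuous.continuousAt.preimage_mem_nhds
    simp only [map_zero]
    exact Icc_mem_nhds (by norm_num) (by norm_num)
  exact Filter.mem_of_superset this fun v hv => ⟨φ v, hv, rfl⟩

noncomputable def rankOne (φ : X →L[ℝ] ℝ) (u : X) : compactOperator (RingHom.id ℝ) X X :=
  ⟨φ.smulRight u, isCompactOperator_smulRight' φ u⟩

noncomputable def rankOneL (φ : X →L[ℝ] ℝ) :
    X →L[ℝ] compactOperator (RingHom.id ℝ) X X :=
  LinearMap.mkContinuous
    { toFun := fun z => rankOne φ z
      map_add' := by
        intro z w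
        apply Subtype.ext
        ext v
        simp [rankOne, smul_add]
      map_smul' := by
        intro r z
        apply Subtype.ext
        ext v
        simp [rankOne, smul_smul, mul_comm] }
    ‖φ‖
    (by
      intro z
      show ‖φ.smulRight z‖ ≤ ‖φ‖ * ‖z‖
      exact (ContinuousLinearMap.norm_smulRight_apply φ z).le)

end Aux

theorem schur_of_sfK_cc [CompleteSpace X]
    (h : ∀ f : KX X →L[ℝ] ℝ, ∀ x y : ℕ → KX X, WeaklyNull x →
      (∃ C : ℝ, ∀ n, ‖y n‖ ≤ C) →
      Tendsto (fun n => f (Kmul (y n) (x n))) atTop (𝓝 0)) :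
    SchurProperty X := by
  intro x L hweak
  -- reduce to showing the weakly null sequence `z n = x n - L` is norm null
  set z : ℕ → X := fun n => x n - L with hz
  have hzw : WeaklyNull z := by
    intro f
    have h2 : Tendsto (fun _ : ℕ => f L) atTop (𝓝 (f L)) := tendsto_const_nhds
    have := (hweak f).sub h2
    simpa [hz, sub_self] using this
  rw [tendsto_iff_norm_sub_tendsto_zero]
  show Tendsto (fun n => ‖z n‖) atTop (𝓝 0)
  rcases subsingleton_or_nontrivial X with hX | hX
  · have : ∀ n, ‖z n‖ = 0 := fun n => by
      rw [norm_eq_zero]; exact Subsingleton.elim _ _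
    simp [this]
  -- pick a nonzero vector `u` and a norming functional `φ`
  obtain ⟨u, hu⟩ := exists_ne (0 : X)
  obtain ⟨φ, hφ1, hφ2⟩ := exists_dual_vector ℝ u (norm_ne_zero_iff.mpr hu)
  -- the rank-one operators `a n = z n ⊗ φ` form a weakly null sequence in `K(X)`
  set a : ℕ → KX X := fun n => rankOneL φ (z n) with ha
  have haw : WeaklyNull a := by
    intro F
    have := hzw (F.comp (rankOneL φ))
    simpa [ha] using this
  -- norming functionals for `z n`
  have hgex : ∀ n, ∃ g : X →L[ℝ] ℝ, ‖g‖ ≤ 1 ∧ g (z n) = ‖z n‖ := fun n =>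
    exists_dual_vector'' ℝ (z n)
  choose g hg1 hg2 using hgex
  set y : ℕ → KX X := fun n => rankOne (g n) u with hy
  have hyb : ∀ n, ‖y n‖ ≤ ‖u‖ := by
    intro n
    have : ‖y n‖ = ‖g n‖ * ‖u‖ := ContinuousLinearMap.norm_smulRight_apply (g n) u
    rw [this]
    calc ‖g n‖ * ‖u‖ ≤ 1 * ‖u‖ := by
          exact mul_le_mul_of_nonneg_right (hg1 n) (norm_nonneg u)
      _ = ‖u‖ := one_mul _
  -- the fixed compact operator `b = u ⊗ φ` is nonzero
  set b : KX X := rankOne φ u with hb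
  have hbne : b ≠ 0 := by
    intro hb0
    have : (φ.smulRight u) u = 0 := by
      have : (b : X →L[ℝ] X) = 0 := by rw [hb0]; rfl
      calc (φ.smulRight u) u = (b : X →L[ℝ] X) u := rfl
        _ = 0 := by rw [this]; rfl
    rw [ContinuousLinearMap.smulRight_apply, hφ2, smul_eq_zero] at this
    rcases this with h1 | h1
    · exact hu (norm_eq_zero.mp h1)
    · exact hu h1
  obtain ⟨f, hf1, hf2⟩ := exists_dual_vector ℝ b (norm_ne_zero_iff.mpr hbne)
  have hbpos : (0 : ℝ) < ‖b‖ := norm_pos_iff.mpr hbne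
  -- key computation: `y n ∘ a n = ‖z n‖ • b`
  have hkey : ∀ n, Kmul (y n) (a n) = ‖z n‖ • b := by
    intro n
    apply Subtype.ext
    show ((g n).smulRight u).comp (φ.smulRight (z n)) = ‖z n‖ • (φ.smulRight u)
    ext v
    simp only [ContinuousLinearMap.comp_apply, ContinuousLinearMap.smulRight_apply,
      ContinuousLinearMap.smul_apply, map_smul, smul_eq_mul, hg2 n]
    rw [smul_smul, smul_smul, mul_comm]
  have hten := h f a y haw ⟨‖u‖, hyb⟩
  have hten' : Tendsto (fun n => ‖z n‖ * ‖b‖) atTop (𝓝 0) := by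
    have : ∀ n, f (Kmul (y n) (a n)) = ‖z n‖ * ‖b‖ := by
      intro n
      have hf2' : f b = ‖b‖ := by exact_mod_cast hf2
      rw [hkey n, map_smul, smul_eq_mul, hf2']
    simpa [this] using hten
  have := hten'.mul_const (‖b‖⁻¹)
  simp only [zero_mul] at this
  convert this using 2 with n
  rw [mul_assoc, mul_inv_cancel₀ (ne_of_gt hbpos), mul_one]
end
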